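/- Let (Ω, 𝓕, ℙ) be a probability space and let M : Ω → ℕ be a measurable random variable with M ≥ 1 almost surely. Let p > 0 be a real number with p < E[M], where the expectation E[M] ∈ (0,∞] is taken in the extended sense (it may be infinite). Then there exists ε > 0 such that for every x ∈ (0,1], E[1 − (1−x)^M] ≥ min(p x, ε). -/

import Mathlib

open MeasureTheory Filter Topology
open scoped ENNReal

private lemma geom_aux (x : ℝ) (m : ℕ) :
    x * ∑ k ∈ Finset.range m, (1 - x) ^ k = 1 - (1 - x) ^ m := by
  linear_combination -geom_sum_mul (1 - x) m

/-- Pemantle's binomial lemma (Lemma 2.3 of Pemantle 1992), in expectation form: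
if `M ≥ 1` a.s. and `p < E[M]` (extended expectation), then there is `ε > 0` with
`E[1 - (1-x)^M] ≥ min (p x) ε` for all `x ∈ (0,1]`. -/
theorem pemantle_binomial
    {Ω : Type*} [MeasurableSpace Ω] (ℙ : Measure Ω) [IsProbabilityMeasure ℙ]
    (M : Ω → ℕ) (hM : Measurable M)
    (hM1 : ∀ᵐ ω ∂ℙ, 1 ≤ M ω)
    (p : ℝ) (hp : 0 < p)
    (hpE : ENNReal.ofReal p < ∫⁻ ω, (M ω : ℝ≥0∞) ∂ℙ) :
    ∃ ε > 0, ∀ x ∈ Set.Ioc (0:ℝ) 1,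
      min (p * x) ε ≤ ∫ ω, (1 - (1 - x) ^ (M ω)) ∂ℙ := by
  classical
  set s : ℕ → ℝ := fun n => 1 / ((n : ℝ) + 2) with hs_def
  have hs_pos : ∀ n, 0 < s n := fun n => by positivity
  have hs_le : ∀ n, s n ≤ 1 := by
    intro n
    rw [hs_def]
    rw [div_le_one (by positivity)]
    have : (0:ℝ) ≤ (n:ℝ) := Nat.cast_nonneg n
    linarith
  have hs_anti : ∀ {a b : ℕ}, a ≤ b → s b ≤ s a := by
    intro a b hab
    apply one_div_le_one_div_of_le (by positivity)
    have : (a:ℝ) ≤ (b:ℝ) := Nat.cast_le.mpr hab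
    linarith
  have hs0 : Tendsto s atTop (𝓝 0) := by
    have h1 : Tendsto (fun n : ℕ => ((n : ℝ) + 2)) atTop atTop := by
      apply tendsto_atTop_add_const_right
      exact tendsto_natCast_atTop_atTop
    simpa [hs_def, one_div, Pi.inv_def] using h1.inv_tendsto_atTop
  -- measurability of functions of M
  have hmeas : ∀ {β : Type} [MeasurableSpace β] (f : ℕ → β),
      Measurable (fun ω => f (M ω)) := by
    intro β _ f
    exact measurable_from_top.comp hM
  -- basic bounds
  have hg_nonneg : ∀ x ∈ Set.Ioc (0:ℝ) 1, ∀ m : ℕ, 0 ≤ 1 - (1 - x) ^ m := by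
    intro x hx m
    have h1 : (1 - x) ^ m ≤ 1 := pow_le_one₀ (by linarith [hx.2]) (by linarith [hx.1])
    linarith
  have hg_le_one : ∀ x ∈ Set.Ioc (0:ℝ) 1, ∀ m : ℕ, 1 - (1 - x) ^ m ≤ 1 := by
    intro x hx m
    have h1 : (0:ℝ) ≤ (1 - x) ^ m := pow_nonneg (by linarith [hx.2]) m
    linarith
  -- integrability
  have hInt : ∀ x ∈ Set.Ioc (0:ℝ) 1,
      Integrable (fun ω => 1 - (1 - x) ^ (M ω)) ℙ := by
    intro x hx
    apply (integrable_const (1:ℝ)).mono'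
      ((hmeas (fun m => 1 - (1 - x) ^ m)).aestronglyMeasurable)
    filter_upwards with ω
    rw [Real.norm_eq_abs, abs_le]
    exact ⟨by linarith [hg_nonneg x hx (M ω)], hg_le_one x hx (M ω)⟩
  -- the approximating sequence
  set h : ℕ → Ω → ℝ≥0∞ :=
    fun n ω => ENNReal.ofReal (∑ k ∈ Finset.range (M ω), (1 - s n) ^ k) with hh_def
  have h_meas : ∀ n, Measurable (h n) := fun n =>
    hmeas (fun m => ENNReal.ofReal (∑ k ∈ Finset.range m, (1 - s n) ^ k))
  have h_mono : ∀ ω, Monotone fun n => h n ω := by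
    intro ω a b hab
    apply ENNReal.ofReal_le_ofReal
    apply Finset.sum_le_sum
    intro k _
    exact pow_le_pow_left₀ (by linarith [hs_le a]) (by linarith [hs_anti hab]) k
  have h_tend : ∀ ω, Tendsto (fun n => h n ω) atTop (𝓝 ((M ω : ℝ≥0∞))) := by
    intro ω
    have hsum : Tendsto (fun n => ∑ k ∈ Finset.range (M ω), (1 - s n) ^ k) atTop
        (𝓝 ((M ω : ℝ))) := by
      have := tendsto_finset_sum (Finset.range (M ω))
        (fun k _ => ((tendsto_const_nhds.sub hs0).pow k :
          Tendsto (fun n => (1 - s n) ^ k) atTop (𝓝 ((1 - 0) ^ k))))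
      simpa using this
    have := ENNReal.tendsto_ofReal hsum
    rwa [ENNReal.ofReal_natCast] at this
  have hT := lintegral_tendsto_of_tendsto_of_monotone (μ := ℙ)
    (fun n => (h_meas n).aemeasurable) (ae_of_all _ h_mono) (ae_of_all _ h_tend)
  obtain ⟨n, hn⟩ : ∃ n, ENNReal.ofReal p < ∫⁻ ω, h n ω ∂ℙ :=
    (hT.eventually_const_lt hpE).exists
  set x0 : ℝ := s n with hx0_def
  have hx0 : 0 < x0 := hs_pos n
  have hx01 : x0 ≤ 1 := hs_le n
  have hx0mem : x0 ∈ Set.Ioc (0:ℝ) 1 := ⟨hx0, hx01⟩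
  -- key lintegral identity
  have hkey : ENNReal.ofReal x0 * ∫⁻ ω, h n ω ∂ℙ
      = ∫⁻ ω, ENNReal.ofReal (1 - (1 - x0) ^ (M ω)) ∂ℙ := by
    rw [← lintegral_const_mul _ (h_meas n)]
    apply lintegral_congr
    intro ω
    rw [hh_def]
    rw [← ENNReal.ofReal_mul hx0.le, geom_aux]
  have h1 : ENNReal.ofReal (p * x0) < ∫⁻ ω, ENNReal.ofReal (1 - (1 - x0) ^ (M ω)) ∂ℙ := by
    rw [← hkey, mul_comm p x0, ENNReal.ofReal_mul hx0.le]
    exact (ENNReal.mul_lt_mul_iff_right ((ENNReal.ofReal_pos.mpr hx0).ne')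
      ENNReal.ofReal_ne_top).mpr hn
  have hfin : ∀ x ∈ Set.Ioc (0:ℝ) 1,
      ∫⁻ ω, ENNReal.ofReal (1 - (1 - x) ^ (M ω)) ∂ℙ ≤ 1 := by
    intro x hx
    calc ∫⁻ ω, ENNReal.ofReal (1 - (1 - x) ^ (M ω)) ∂ℙ
        ≤ ∫⁻ _, 1 ∂ℙ := by
          apply lintegral_mono
          intro ω
          rw [show (1:ℝ≥0∞) = ENNReal.ofReal 1 by simp]
          exact ENNReal.ofReal_le_ofReal (hg_le_one x hx (M ω))
      _ = 1 := by simp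
  have hIeq : ∀ x ∈ Set.Ioc (0:ℝ) 1,
      ∫ ω, (1 - (1 - x) ^ (M ω)) ∂ℙ
        = (∫⁻ ω, ENNReal.ofReal (1 - (1 - x) ^ (M ω)) ∂ℙ).toReal := by
    intro x hx
    exact integral_eq_lintegral_of_nonneg_ae (ae_of_all _ fun ω => hg_nonneg x hx (M ω))
      ((hmeas (fun m => 1 - (1 - x) ^ m)).aestronglyMeasurable)
  have h2 : p * x0 ≤ ∫ ω, (1 - (1 - x0) ^ (M ω)) ∂ℙ := by
    rw [hIeq x0 hx0mem]
    have hne : (∫⁻ ω, ENNReal.ofReal (1 - (1 - x0) ^ (M ω)) ∂ℙ) ≠ ⊤ :=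
      (lt_of_le_of_lt (hfin x0 hx0mem) ENNReal.one_lt_top).ne
    have := ENNReal.toReal_mono hne h1.le
    rwa [ENNReal.toReal_ofReal (by positivity)] at this
  refine ⟨p * x0, by positivity, ?_⟩
  intro x hx
  rcases le_total x x0 with hle | hle
  · refine le_trans (min_le_left _ _) ?_
    have hpt : (fun ω => (x / x0) * (1 - (1 - x0) ^ (M ω)))
        ≤ fun ω => 1 - (1 - x) ^ (M ω) := by
      intro ω
      show x / x0 * (1 - (1 - x0) ^ (M ω)) ≤ 1 - (1 - x) ^ (M ω)
      rw [← geom_aux x0, ← geom_aux x, ← mul_assoc, div_mul_cancel₀ _ hx0.ne']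
      apply mul_le_mul_of_nonneg_left _ hx.1.le
      apply Finset.sum_le_sum
      intro k _
      exact pow_le_pow_left₀ (by linarith [hx01]) (by linarith) k
    have hmono := integral_mono ((hInt x0 hx0mem).const_mul (x / x0)) (hInt x hx) hpt
    rw [MeasureTheory.integral_const_mul] at hmono
    have hstep : x / x0 * (p * x0) ≤ x / x0 * ∫ ω, (1 - (1 - x0) ^ (M ω)) ∂ℙ :=
      mul_le_mul_of_nonneg_left h2 (div_nonneg hx.1.le hx0.le)
    calc p * x = x / x0 * (p * x0) := by field_simp
      _ ≤ _ := hstep.trans hmono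
  · refine le_trans (min_le_right _ _) (h2.trans ?_)
    apply integral_mono (hInt x0 hx0mem) (hInt x hx)
    intro ω
    have hpp : (1 - x) ^ (M ω) ≤ (1 - x0) ^ (M ω) :=
      pow_le_pow_left₀ (by linarith [hx.2]) (by linarith) (M ω)
    show 1 - (1 - x0) ^ (M ω) ≤ 1 - (1 - x) ^ (M ω)
    linarith
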